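/- Assume n ≤ m and let i be an integer with 1 ≤ i ≤ 2N−1 and i ≠ N. Let a₀,…,a_{m+n} ∈ ℂ and q = ∑_{s=0}^{m+n} aₛ·z^{(m+n−s)N+i}·w^{Ns}. Then q is quasi-invariant if and only if its coefficients satisfy: (i) ∑_{0 ≤ s ≤ m+n, s even} aₛ·((m+n−2s)N+i)^{2t−1} = 0 for all t with 1 ≤ t ≤ n; (ii) ∑_{0 ≤ s ≤ m+n, s odd} aₛ·((m+n−2s)N+i)^{2t−1} = 0 for all t with 1 ≤ t ≤ n; (iii) ∑_{s=0}^{m+n} aₛ·((m+n−2s)N+i)^{2t−1} = 0 for all t with n < t ≤ m. -/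

import Mathlib

section PolyAux
open Polynomial Finset
noncomputable section
namespace QIAux


def chPoly (r : ℕ) : Polynomial ℂ := Polynomial.C ((r.factorial : ℂ))⁻¹ * descPochhammer ℂ r

lemma chPoly_eval_nat (r k : ℕ) : (chPoly r).eval (k : ℂ) = (k.choose r : ℂ) := by
  have hfac : ((r.factorial : ℂ)) ≠ 0 := Nat.cast_ne_zero.mpr r.factorial_ne_zero
  rw [chPoly, eval_mul, eval_C, descPochhammer_eval_eq_descFactorial,
    Nat.descFactorial_eq_factorial_mul_choose]
  push_cast
  field_simp

lemma chPoly_natDegree (r : ℕ) : (chPoly r).natDegree = r := by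
  have hfac : ((r.factorial : ℂ)) ≠ 0 := Nat.cast_ne_zero.mpr r.factorial_ne_zero
  rw [chPoly, natDegree_C_mul (inv_ne_zero hfac), descPochhammer_natDegree]

lemma chPoly_leadingCoeff (r : ℕ) : (chPoly r).leadingCoeff = ((r.factorial : ℂ))⁻¹ := by
  rw [chPoly, leadingCoeff_mul, leadingCoeff_C, (monic_descPochhammer ℂ r).leadingCoeff, mul_one]

def FF (D : ℂ) (r : ℕ) : Polynomial ℂ :=
  (chPoly r).comp (C (-2⁻¹) * X + C (D / 2)) - (chPoly r).comp (C (2⁻¹) * X + C (D / 2))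

lemma FF_eval (u v r : ℕ) :
    (FF ((u : ℂ) + v) r).eval ((v : ℂ) - u) = (u.choose r : ℂ) - (v.choose r : ℂ) := by
  have h1 : ((C (-2⁻¹) * X + C (((u : ℂ) + v) / 2)).eval ((v : ℂ) - u)) = (u : ℂ) := by
    simp; ring
  have h2 : ((C (2⁻¹) * X + C (((u : ℂ) + v) / 2)).eval ((v : ℂ) - u)) = (v : ℂ) := by
    simp; ring
  rw [FF, eval_sub, eval_comp, eval_comp, h1, h2, chPoly_eval_nat, chPoly_eval_nat]

lemma coeff_comp_neg_X (p : Polynomial ℂ) (k : ℕ) :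
    (p.comp (-X)).coeff k = (-1) ^ k * p.coeff k := by
  induction p using Polynomial.induction_on' with
  | add p q hp hq => rw [add_comp, coeff_add, hp, hq, coeff_add, mul_add]
  | monomial n a =>
    have hnx : (-X : Polynomial ℂ) = C (-1) * X := by simp
    rw [← C_mul_X_pow_eq_monomial, mul_comp, C_comp, pow_comp, X_comp, hnx, mul_pow, ← C_pow]
    by_cases h : k = n
    · subst h
      simp only [coeff_C_mul, coeff_X_pow, if_pos rfl, mul_one]
      ring
    · rw [coeff_C_mul, coeff_C_mul, coeff_X_pow, if_neg h, coeff_C_mul, coeff_X_pow, if_neg h]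
      ring

lemma even_coeff_eq_zero {p : Polynomial ℂ} (hodd : p.comp (-X) = -p) {k : ℕ} (hk : Even k) :
    p.coeff k = 0 := by
  have h := congrArg (fun q => Polynomial.coeff q k) hodd
  simp only [coeff_comp_neg_X, coeff_neg, hk.neg_one_pow, one_mul] at h
  have h2 : (2 : ℂ) * p.coeff k = 0 := by linear_combination h
  simpa using h2

set_option linter.unnecessarySimpa false in
lemma FF_odd (D : ℂ) (r : ℕ) : (FF D r).comp (-X) = -(FF D r) := by
  have h1 : ((C (-2⁻¹ : ℂ) * X + C (D / 2)).comp (-X)) = C (2⁻¹) * X + C (D / 2) := by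
    simp [add_comp, mul_comp, C_comp, X_comp]
  have h2 : ((C (2⁻¹ : ℂ) * X + C (D / 2)).comp (-X)) = C (-2⁻¹) * X + C (D / 2) := by
    simp [add_comp, mul_comp, C_comp, X_comp]
  rw [FF, sub_comp, comp_assoc, comp_assoc, h1, h2, neg_sub]

lemma FF_natDegree_le (D : ℂ) (r : ℕ) : (FF D r).natDegree ≤ r := by
  have key : ∀ a b : ℂ, ((chPoly r).comp (C a * X + C b)).natDegree ≤ r := by
    intro a b
    refine le_trans natDegree_comp_le ?_
    rw [chPoly_natDegree]
    calc r * (C a * X + C b).natDegree ≤ r * 1 := Nat.mul_le_mul_left r natDegree_linear_le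
    _ = r := mul_one r
  exact le_trans (natDegree_sub_le _ _) (max_le (key _ _) (key _ _))

lemma comp_linear_coeff_top (p : Polynomial ℂ) (a b : ℂ) (ha : a ≠ 0) :
    (p.comp (C a * X + C b)).coeff p.natDegree = p.leadingCoeff * a ^ p.natDegree := by
  have hd : (C a * X + C b).natDegree = 1 := natDegree_linear ha
  have hnd : (p.comp (C a * X + C b)).natDegree = p.natDegree := by
    rw [natDegree_comp, hd, mul_one]
  calc (p.comp (C a * X + C b)).coeff p.natDegree
      = (p.comp (C a * X + C b)).leadingCoeff := by rw [Polynomial.leadingCoeff, hnd]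
    _ = p.leadingCoeff * (C a * X + C b).leadingCoeff ^ p.natDegree :=
        leadingCoeff_comp (by rw [hd]; exact one_ne_zero)
    _ = p.leadingCoeff * a ^ p.natDegree := by rw [leadingCoeff_linear ha]

lemma FF_coeff_top (D : ℂ) (r : ℕ) (hr : Odd r) : (FF D r).coeff r ≠ 0 := by
  have hfac : ((r.factorial : ℂ)) ≠ 0 := Nat.cast_ne_zero.mpr r.factorial_ne_zero
  have h1 := comp_linear_coeff_top (chPoly r) (-2⁻¹) (D / 2) (by norm_num)
  have h2 := comp_linear_coeff_top (chPoly r) (2⁻¹) (D / 2) (by norm_num)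
  rw [chPoly_natDegree, chPoly_leadingCoeff] at h1 h2
  have hco : (FF D r).coeff r = ((r.factorial : ℂ))⁻¹ * ((-2⁻¹) ^ r - (2⁻¹) ^ r) := by
    rw [FF, coeff_sub, h1, h2]; ring
  rw [hco, hr.neg_pow]
  intro hzero
  rcases mul_eq_zero.mp hzero with h | h
  · exact (inv_ne_zero hfac) h
  · have : (2⁻¹ : ℂ) ^ r ≠ 0 := pow_ne_zero _ (by norm_num)
    apply this
    have h2 : (2 : ℂ) * (2⁻¹ : ℂ) ^ r = 0 := by linear_combination -h
    simpa using h2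

lemma odd_expansion {p : Polynomial ℂ} (hodd : p.comp (-X) = -p) {M : ℕ}
    (hdeg : p.natDegree ≤ 2 * M) :
    p = ∑ k ∈ Finset.range M, C (p.coeff (2 * k + 1)) * X ^ (2 * k + 1) := by
  ext j
  rw [finset_sum_coeff]
  simp only [coeff_C_mul, coeff_X_pow]
  rcases Nat.even_or_odd j with hj | hj
  · rw [even_coeff_eq_zero hodd hj]
    symm
    apply Finset.sum_eq_zero
    intro k _
    rcases hj with ⟨t, ht⟩
    rw [if_neg (show ¬ j = 2 * k + 1 by omega), mul_zero]
  · obtain ⟨t, ht⟩ := hj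
    have htj : j = 2 * t + 1 := by omega
    by_cases htM : t < M
    · symm
      rw [Finset.sum_eq_single t]
      · rw [if_pos htj, mul_one, htj]
      · intro k _ hk
        rw [if_neg (show ¬ j = 2 * k + 1 by omega), mul_zero]
      · intro h
        exact absurd (Finset.mem_range.mpr htM) h
    · rw [coeff_eq_zero_of_natDegree_lt (by omega)]
      symm
      apply Finset.sum_eq_zero
      intro k hk
      rw [Finset.mem_range] at hk
      rw [if_neg (show ¬ j = 2 * k + 1 by omega), mul_zero]

/-- The key linear-algebra equivalence between binomial-coefficient conditions and
odd-power-sum conditions. -/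
lemma linalg (S : Finset ℕ) (b : ℕ → ℂ) (u v : ℕ → ℕ) (D : ℕ)
    (hD : ∀ s ∈ S, u s + v s = D) (M : ℕ) :
    (∀ r ≤ 2 * M, ∑ s ∈ S, b s * (((u s).choose r : ℂ) - ((v s).choose r : ℂ)) = 0) ↔
    (∀ k, 1 ≤ k → k ≤ M → ∑ s ∈ S, b s * (((v s : ℂ)) - (u s : ℂ)) ^ (2 * k - 1) = 0) := by
  set μ : ℕ → ℂ := fun s => ((v s : ℂ)) - (u s : ℂ) with hμ
  have hFFeval : ∀ r, ∀ s ∈ S, (FF (D : ℂ) r).eval (μ s)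
      = ((u s).choose r : ℂ) - ((v s).choose r : ℂ) := by
    intro r s hs
    have : ((D : ℕ) : ℂ) = ((u s : ℂ)) + (v s : ℂ) := by
      rw [← hD s hs]; push_cast; ring
    rw [this]
    exact FF_eval (u s) (v s) r
  -- evaluation of the sum functional on FF, expanded in odd monomials
  have hLFF : ∀ r M' : ℕ, r ≤ 2 * M' →
      ∑ s ∈ S, b s * (((u s).choose r : ℂ) - ((v s).choose r : ℂ))
        = ∑ k ∈ Finset.range M', (FF (D : ℂ) r).coeff (2 * k + 1) *
            (∑ s ∈ S, b s * μ s ^ (2 * k + 1)) := by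
    intro r M' hrM
    have hexp := odd_expansion (FF_odd (D : ℂ) r) (le_trans (FF_natDegree_le (D : ℂ) r) hrM)
    calc ∑ s ∈ S, b s * (((u s).choose r : ℂ) - ((v s).choose r : ℂ))
        = ∑ s ∈ S, b s * (FF (D : ℂ) r).eval (μ s) := by
          apply Finset.sum_congr rfl
          intro s hs
          rw [hFFeval r s hs]
      _ = ∑ s ∈ S, ∑ k ∈ Finset.range M',
            (FF (D : ℂ) r).coeff (2 * k + 1) * (b s * μ s ^ (2 * k + 1)) := by
          apply Finset.sum_congr rfl
          intro s _
          conv_lhs => rw [hexp]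
          rw [eval_finset_sum, Finset.mul_sum]
          apply Finset.sum_congr rfl
          intro k _
          rw [eval_mul, eval_C, eval_pow, eval_X]
          ring
      _ = _ := by
          rw [Finset.sum_comm]
          apply Finset.sum_congr rfl
          intro k _
          rw [Finset.mul_sum]
  constructor
  · intro h k hk1 hkM
    -- strong induction: ∀ k' < M, power sum at 2k'+1 vanishes
    have key : ∀ k' : ℕ, k' < M → ∑ s ∈ S, b s * μ s ^ (2 * k' + 1) = 0 := by
      intro k'
      induction k' using Nat.strong_induction_on with
      | _ k' ih =>
        intro hk'M
        have hr : 2 * k' + 1 ≤ 2 * M := by omega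
        have h0 := h (2 * k' + 1) hr
        rw [hLFF (2 * k' + 1) (k' + 1) (by omega)] at h0
        rw [Finset.sum_range_succ] at h0
        have hzero : ∑ k ∈ Finset.range k', (FF (D : ℂ) (2 * k' + 1)).coeff (2 * k + 1) *
            (∑ s ∈ S, b s * μ s ^ (2 * k + 1)) = 0 := by
          apply Finset.sum_eq_zero
          intro k hk
          rw [Finset.mem_range] at hk
          rw [ih k hk (by omega), mul_zero]
        rw [hzero, zero_add] at h0
        exact (mul_eq_zero.mp h0).resolve_left (FF_coeff_top (D : ℂ) (2 * k' + 1) ⟨k', by ring⟩)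
    have := key (k - 1) (by omega)
    have he : 2 * (k - 1) + 1 = 2 * k - 1 := by omega
    rwa [he] at this
  · intro h r hr
    rw [hLFF r M hr]
    apply Finset.sum_eq_zero
    intro k hk
    rw [Finset.mem_range] at hk
    have := h (k + 1) (by omega) (by omega)
    have he : 2 * (k + 1) - 1 = 2 * k + 1 := by omega
    rw [he] at this
    rw [this, mul_zero]

end QIAux
end
end PolyAux


open MvPolynomial Finset

noncomputable section

/-- The polynomial ring `R = ℂ[z,w]`. -/
abbrev R2 : Type := MvPolynomial (Fin 2) ℂ

/-- `z`, the first variable. -/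
def zP : R2 := X 0

/-- `w`, the second variable (playing the role of `z̄`). -/
def wP : R2 := X 1

/-- `ε = exp(πi/N)`, a primitive `2N`-th root of unity. -/
def eps (N : ℕ) : ℂ := Complex.exp ((Real.pi : ℂ) * Complex.I / (N : ℂ))

/-- The reflection `σⱼ : z ↦ ε^j w, w ↦ ε^{-j} z` as a `ℂ`-algebra endomorphism. -/
def dihRefl (N j : ℕ) : R2 →ₐ[ℂ] R2 :=
  aeval (fun k : Fin 2 => if k = 0 then C (eps N ^ j) * X 1 else C (eps N ^ (-(j : ℤ))) * X 0)

/-- The multiplicity `mⱼ`: `m` for even `j`, `n` for odd `j`. -/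
def mult (m n j : ℕ) : ℕ := if Even j then m else n

/-- Quasi-invariance for the dihedral system `I₂(2N)` with multiplicities `(m,n)`. -/
def IsQuasiInv (N m n : ℕ) (p : R2) : Prop :=
  ∀ j < 2 * N, (zP - C (eps N ^ j) * wP) ^ (2 * mult m n j + 1) ∣ dihRefl N j p - p

namespace QIAux


/-- The exponent pair `(p, q)` for the monomial `z^p w^q`. -/
def m2 (p q : ℕ) : Fin 2 →₀ ℕ := Finsupp.single 0 p + Finsupp.single 1 q

lemma m2_fst (p q : ℕ) : (m2 p q) 0 = p := by
  simp [m2, Finsupp.single_apply]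

lemma monom_eq (a : ℂ) (p q : ℕ) :
    C a * zP ^ p * wP ^ q = monomial (m2 p q) a := by
  rw [zP, wP, X_pow_eq_monomial, X_pow_eq_monomial, C_apply, monomial_mul, monomial_mul, m2,
    zero_add, mul_one, mul_one]

/-- The shear `z ↦ z + c w, w ↦ w`. -/
def TT (c : ℂ) : R2 →ₐ[ℂ] R2 :=
  aeval (fun k : Fin 2 => if k = 0 then X 0 + C c * X 1 else X 1)

lemma TT_z (c : ℂ) : TT c zP = zP + C c * wP := by
  simp [TT, zP, wP, aeval_X]

lemma TT_w (c : ℂ) : TT c wP = wP := by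
  simp [TT, wP, aeval_X]

lemma TT_C (c a : ℂ) : TT c (C a) = C a := by
  simp [TT, algHom_C]

lemma TT_TT (c : ℂ) (p : R2) : TT (-c) (TT c p) = p := by
  have h : (TT (-c)).comp (TT c) = AlgHom.id ℂ R2 := by
    apply MvPolynomial.algHom_ext
    intro k
    fin_cases k <;> simp [TT, aeval_X]
  calc TT (-c) (TT c p) = ((TT (-c)).comp (TT c)) p := rfl
    _ = p := by rw [h]; rfl

lemma dvd_TT_iff (c : ℂ) (K : ℕ) (f : R2) :
    (zP - C c * wP) ^ K ∣ f ↔ zP ^ K ∣ TT c f := by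
  have hz : TT c (zP - C c * wP) = zP := by
    rw [map_sub, TT_z, map_mul, TT_C, TT_w]; ring
  have hz' : TT (-c) zP = zP - C c * wP := by
    rw [TT_z, C_neg]; ring
  constructor
  · intro h
    have := map_dvd (TT c) h
    rwa [map_pow, hz] at this
  · intro h
    have := map_dvd (TT (-c)) h
    rwa [map_pow, hz', TT_TT] at this

lemma expand (c : ℂ) (M L D : ℕ) (h : M + L = D) :
    (zP + C c * wP) ^ M * wP ^ L
      = ∑ r ∈ Finset.range (D + 1),
          C (((M.choose r : ℂ)) * c ^ (M - r)) * zP ^ r * wP ^ (D - r) := by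
  have step1 : (zP + C c * wP) ^ M * wP ^ L
      = ∑ r ∈ Finset.range (M + 1),
          C (((M.choose r : ℂ)) * c ^ (M - r)) * zP ^ r * wP ^ (D - r) := by
    rw [add_pow, Finset.sum_mul]
    apply Finset.sum_congr rfl
    intro r hr
    rw [Finset.mem_range] at hr
    have hw : M - r + L = D - r := by omega
    have hcast : ((M.choose r : ℕ) : R2) = C ((M.choose r : ℂ)) := by
      rw [← map_natCast (C : ℂ →+* R2)]
    rw [hcast, mul_pow, ← C_pow, ← hw, pow_add, C_mul]
    ring
  rw [step1]
  apply Finset.sum_subset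
  · exact Finset.range_subset_range.mpr (by omega)
  · intro r _ hr
    rw [Finset.mem_range, not_lt] at hr
    rw [Nat.choose_eq_zero_of_lt (by omega), Nat.cast_zero, zero_mul, map_zero, zero_mul,
      zero_mul]

lemma zpow_dvd_sum_iff (φ : ℕ → ℂ) (D K : ℕ) :
    (zP ^ K ∣ ∑ r ∈ Finset.range (D + 1), C (φ r) * zP ^ r * wP ^ (D - r)) ↔
      ∀ r, r < K → r ≤ D → φ r = 0 := by
  constructor
  · rintro ⟨g, hg⟩ r hrK hrD
    have hcoeff := congrArg (fun p : R2 => coeff (m2 r (D - r)) p) hg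
    have hL : coeff (m2 r (D - r)) (∑ r' ∈ Finset.range (D + 1),
        C (φ r') * zP ^ r' * wP ^ (D - r')) = φ r := by
      rw [Finset.sum_congr rfl (fun r' _ => monom_eq (φ r') r' (D - r')), coeff_sum,
        Finset.sum_eq_single r]
      · rw [coeff_monomial, if_pos rfl]
      · intro r' _ hne
        rw [coeff_monomial, if_neg]
        intro hEq
        apply hne
        have h0 := congrArg (fun f : Fin 2 →₀ ℕ => f 0) hEq
        simpa [m2_fst] using h0
      · intro hmem
        exact absurd (Finset.mem_range.mpr (by omega)) hmem
    have hR : coeff (m2 r (D - r)) (zP ^ K * g) = 0 := by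
      rw [zP, X_pow_eq_monomial, coeff_monomial_mul', if_neg]
      rw [Finsupp.single_le_iff, m2_fst]
      omega
    rw [hL, hR] at hcoeff
    exact hcoeff
  · intro h
    apply Finset.dvd_sum
    intro r hr
    by_cases hrK : r < K
    · rw [Finset.mem_range] at hr
      rw [h r hrK (by omega), map_zero, zero_mul, zero_mul]
      exact dvd_zero _
    · push_neg at hrK
      exact Dvd.dvd.trans (pow_dvd_pow zP hrK) ⟨C (φ r) * wP ^ (D - r), by ring⟩

lemma TT_sum (c : ℂ) (D : ℕ) (S : Finset ℕ) (α β : ℕ → ℂ) (A B : ℕ → ℕ)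
    (hAB : ∀ s ∈ S, A s + B s = D) :
    TT c (∑ s ∈ S, (C (α s) * zP ^ B s * wP ^ A s - C (β s) * zP ^ A s * wP ^ B s))
      = ∑ r ∈ Finset.range (D + 1),
          C (∑ s ∈ S, (α s * (((B s).choose r : ℕ) : ℂ) * c ^ (B s - r)
              - β s * (((A s).choose r : ℕ) : ℂ) * c ^ (A s - r))) * zP ^ r * wP ^ (D - r) := by
  have hterm : ∀ s ∈ S,
      TT c (C (α s) * zP ^ B s * wP ^ A s - C (β s) * zP ^ A s * wP ^ B s)
        = ∑ r ∈ Finset.range (D + 1),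
            C ((α s * (((B s).choose r : ℕ) : ℂ) * c ^ (B s - r)
              - β s * (((A s).choose r : ℕ) : ℂ) * c ^ (A s - r))) * zP ^ r * wP ^ (D - r) := by
    intro s hs
    have hBA : B s + A s = D := by have := hAB s hs; omega
    have hAB' : A s + B s = D := hAB s hs
    rw [map_sub, map_mul, map_mul, map_mul, map_mul, map_pow, map_pow, map_pow, map_pow,
      TT_C, TT_C, TT_z, TT_w]
    rw [mul_assoc (C (α s)), mul_assoc (C (β s)), expand c (B s) (A s) D hBA,
      expand c (A s) (B s) D hAB', Finset.mul_sum, Finset.mul_sum,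
      ← Finset.sum_sub_distrib]
    apply Finset.sum_congr rfl
    intro r _
    simp only [C_sub, C_mul]
    ring
  rw [map_sum, Finset.sum_congr rfl hterm, Finset.sum_comm]
  apply Finset.sum_congr rfl
  intro r _
  rw [← Finset.sum_mul, ← Finset.sum_mul, ← map_sum]

lemma coeff_dvd (c : ℂ) (K D : ℕ) (S : Finset ℕ) (α β : ℕ → ℂ) (A B : ℕ → ℕ)
    (hAB : ∀ s ∈ S, A s + B s = D) :
    ((zP - C c * wP) ^ K ∣
        ∑ s ∈ S, (C (α s) * zP ^ B s * wP ^ A s - C (β s) * zP ^ A s * wP ^ B s))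
      ↔ ∀ r < K, ∑ s ∈ S, (α s * (((B s).choose r : ℕ) : ℂ) * c ^ (B s - r)
            - β s * (((A s).choose r : ℕ) : ℂ) * c ^ (A s - r)) = 0 := by
  rw [dvd_TT_iff, TT_sum c D S α β A B hAB, zpow_dvd_sum_iff]
  constructor
  · intro h r hrK
    by_cases hrD : r ≤ D
    · exact h r hrK hrD
    · apply Finset.sum_eq_zero
      intro s hs
      have hs' := hAB s hs
      rw [Nat.choose_eq_zero_of_lt (by omega), Nat.choose_eq_zero_of_lt (by omega)]
      push_cast
      ring
  · intro h r hrK _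
    exact h r hrK

lemma scalar_bridge (c κ t : ℂ) (hc : c ≠ 0) (hκ : κ ≠ 0) (A B : ℕ → ℕ) (S : Finset ℕ)
    (a : ℕ → ℂ) (hA : ∀ s ∈ S, c ^ A s = κ * t ^ s) (r : ℕ) :
    (∑ s ∈ S, ((a s * c ^ A s * (c⁻¹) ^ B s) * (((B s).choose r : ℕ) : ℂ) * c ^ (B s - r)
        - a s * (((A s).choose r : ℕ) : ℂ) * c ^ (A s - r)) = 0)
      ↔ ∑ s ∈ S, (a s * t ^ s) * ((((B s).choose r : ℕ) : ℂ) - (((A s).choose r : ℕ) : ℂ))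
          = 0 := by
  have hkey : c ^ r * (∑ s ∈ S, ((a s * c ^ A s * (c⁻¹) ^ B s) * (((B s).choose r : ℕ) : ℂ)
        * c ^ (B s - r) - a s * (((A s).choose r : ℕ) : ℂ) * c ^ (A s - r)))
      = κ * ∑ s ∈ S, (a s * t ^ s) * ((((B s).choose r : ℕ) : ℂ)
          - (((A s).choose r : ℕ) : ℂ)) := by
    rw [Finset.mul_sum, Finset.mul_sum]
    apply Finset.sum_congr rfl
    intro s hs
    have hkeypow : ∀ M : ℕ, ((M.choose r : ℕ) : ℂ) * c ^ (M - r) * c ^ r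
        = ((M.choose r : ℕ) : ℂ) * c ^ M := by
      intro M
      by_cases hrM : r ≤ M
      · rw [mul_assoc, ← pow_add]
        congr 2
        omega
      · rw [Nat.choose_eq_zero_of_lt (by omega), Nat.cast_zero, zero_mul, zero_mul, zero_mul]
    have h1 := hkeypow (B s)
    have h2 := hkeypow (A s)
    have hc1 : (c⁻¹) ^ B s * c ^ B s = 1 := by
      rw [← mul_pow, inv_mul_cancel₀ hc, one_pow]
    have hA' := hA s hs
    linear_combination (a s * c ^ A s * (c⁻¹) ^ B s) * h1 - a s * h2
      + (a s * (((B s).choose r : ℕ) : ℂ) * c ^ A s) * hc1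
      + (a s * (((B s).choose r : ℕ) : ℂ) - a s * (((A s).choose r : ℕ) : ℂ)) * hA'
  constructor
  · intro h
    rw [h, mul_zero] at hkey
    exact (mul_eq_zero.mp hkey.symm).resolve_left hκ
  · intro h
    rw [h, mul_zero] at hkey
    exact (mul_eq_zero.mp hkey).resolve_left (pow_ne_zero _ hc)


lemma dihRefl_term (N j : ℕ) (a : ℂ) (p q : ℕ) :
    dihRefl N j (C a * zP ^ p * wP ^ q)
      = C (a * (eps N ^ j) ^ p * ((eps N ^ j)⁻¹) ^ q) * zP ^ q * wP ^ p := by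
  have hd : eps N ^ (-(j : ℤ)) = (eps N ^ j)⁻¹ := by
    rw [zpow_neg, zpow_natCast]
  rw [map_mul, map_mul, map_pow, map_pow]
  have h1 : dihRefl N j (C a) = C a := by simp [dihRefl, algHom_C]
  have h2 : dihRefl N j zP = C (eps N ^ j) * wP := by simp [dihRefl, zP, wP, aeval_X]
  have h3 : dihRefl N j wP = C ((eps N ^ j)⁻¹) * zP := by simp [dihRefl, zP, wP, aeval_X, hd]
  rw [h1, h2, h3, mul_pow, mul_pow, ← C_pow, ← C_pow, C_mul, C_mul]
  ring

end QIAux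

theorem quasiInvariance_conditions_reduced (N m n i : ℕ) (hN : 1 ≤ N) (hnm : n ≤ m)
    (hi1 : 1 ≤ i) (hi2 : i ≤ 2 * N - 1) (hiN : i ≠ N) (a : ℕ → ℂ) :
    IsQuasiInv N m n
        (∑ s ∈ Finset.range (m + n + 1),
          C (a s) * zP ^ ((m + n - s) * N + i) * wP ^ (N * s)) ↔
      (∀ t, 1 ≤ t → t ≤ n →
          ∑ s ∈ (Finset.range (m + n + 1)).filter (fun s => Even s),
            a s * ((((m : ℂ) + n) - 2 * s) * N + i) ^ (2 * t - 1) = 0) ∧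
      (∀ t, 1 ≤ t → t ≤ n →
          ∑ s ∈ (Finset.range (m + n + 1)).filter (fun s => ¬ Even s),
            a s * ((((m : ℂ) + n) - 2 * s) * N + i) ^ (2 * t - 1) = 0) ∧
      (∀ t, n < t → t ≤ m →
          ∑ s ∈ Finset.range (m + n + 1),
            a s * ((((m : ℂ) + n) - 2 * s) * N + i) ^ (2 * t - 1) = 0) := by
  have hc : ∀ j : ℕ, (eps N ^ j) ≠ 0 := fun j => pow_ne_zero _ (Complex.exp_ne_zero _)
  have hNC : ((N : ℂ)) ≠ 0 := Nat.cast_ne_zero.mpr (by omega)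
  have hepsN : eps N ^ N = -1 := by
    rw [eps, ← Complex.exp_nat_mul]
    have h1 : (N : ℂ) * ((Real.pi : ℂ) * Complex.I / (N : ℂ)) = (Real.pi : ℂ) * Complex.I := by
      field_simp
    rw [h1, Complex.exp_pi_mul_I]
  set S := Finset.range (m + n + 1) with hS
  have hsmn : ∀ s ∈ S, s ≤ m + n := by
    intro s hs
    rw [hS, Finset.mem_range] at hs
    omega
  have hABsum : ∀ s ∈ S, ((m + n - s) * N + i) + N * s = (m + n) * N + i := by
    intro s hs
    have h := hsmn s hs
    have h2 : (m + n - s) * N + N * s = (m + n) * N := by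
      rw [Nat.mul_comm N s, ← Nat.add_mul, Nat.sub_add_cancel h]
    calc ((m + n - s) * N + i) + N * s = ((m + n - s) * N + N * s) + i := by ring
      _ = (m + n) * N + i := by rw [h2]
  have hBAsum : ∀ s ∈ S, N * s + ((m + n - s) * N + i) = (m + n) * N + i := by
    intro s hs
    rw [Nat.add_comm]
    exact hABsum s hs
  have hApow : ∀ j : ℕ, ∀ s ∈ S, (eps N ^ j) ^ ((m + n - s) * N + i)
      = (((-1 : ℂ) ^ j) ^ (m + n) * (eps N ^ j) ^ i) * ((-1 : ℂ) ^ j) ^ s := by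
    intro j s hs
    have h := hsmn s hs
    have hcN : (eps N ^ j) ^ N = (-1 : ℂ) ^ j := by
      rw [← pow_mul, mul_comm, pow_mul, hepsN]
    have h1 : (eps N ^ j) ^ ((m + n - s) * N + i)
        = ((-1 : ℂ) ^ j) ^ (m + n - s) * (eps N ^ j) ^ i := by
      rw [pow_add, mul_comm (m + n - s) N, pow_mul, hcN]
    have h2 : ((-1 : ℂ) ^ j) ^ (m + n - s) * ((-1 : ℂ) ^ j) ^ s
        = ((-1 : ℂ) ^ j) ^ (m + n) := by
      rw [← pow_add]
      congr 1
      omega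
    have h3 : ((-1 : ℂ) ^ j) ^ s * ((-1 : ℂ) ^ j) ^ s = 1 := by
      rw [← mul_pow, ← mul_pow]
      norm_num
    linear_combination h1 + ((eps N ^ j) ^ i * ((-1 : ℂ) ^ j) ^ s) * h2
      - ((eps N ^ j) ^ i * ((-1 : ℂ) ^ j) ^ (m + n - s)) * h3
  have hκ : ∀ j : ℕ, ((-1 : ℂ) ^ j) ^ (m + n) * (eps N ^ j) ^ i ≠ 0 :=
    fun j => mul_ne_zero (pow_ne_zero _ (pow_ne_zero _ (by norm_num))) (pow_ne_zero _ (hc j))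
  have hrefl : ∀ j : ℕ,
      dihRefl N j (∑ s ∈ S, C (a s) * zP ^ ((m + n - s) * N + i) * wP ^ (N * s))
          - (∑ s ∈ S, C (a s) * zP ^ ((m + n - s) * N + i) * wP ^ (N * s))
        = ∑ s ∈ S, (C (a s * (eps N ^ j) ^ ((m + n - s) * N + i) * ((eps N ^ j)⁻¹) ^ (N * s))
              * zP ^ (N * s) * wP ^ ((m + n - s) * N + i)
            - C (a s) * zP ^ ((m + n - s) * N + i) * wP ^ (N * s)) := by
    intro j
    rw [map_sum, ← Finset.sum_sub_distrib]
    apply Finset.sum_congr rfl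
    intro s _
    rw [QIAux.dihRefl_term]
  have hjE : ∀ j : ℕ, Even j →
      (((zP - C (eps N ^ j) * wP) ^ (2 * mult m n j + 1) ∣
          dihRefl N j (∑ s ∈ S, C (a s) * zP ^ ((m + n - s) * N + i) * wP ^ (N * s))
            - ∑ s ∈ S, C (a s) * zP ^ ((m + n - s) * N + i) * wP ^ (N * s))
        ↔ ∀ r < 2 * m + 1,
            ∑ s ∈ S, a s * (((N * s).choose r : ℂ)
              - ((((m + n - s) * N + i).choose r : ℂ))) = 0) := by
    intro j hj
    rw [hrefl j, show mult m n j = m from if_pos hj]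
    refine (QIAux.coeff_dvd (eps N ^ j) (2 * m + 1) ((m + n) * N + i) S
        (fun s => a s * (eps N ^ j) ^ ((m + n - s) * N + i) * ((eps N ^ j)⁻¹) ^ (N * s))
        (fun s => a s) (fun s => (m + n - s) * N + i) (fun s => N * s) hABsum).trans ?_
    refine forall₂_congr fun r _ => ?_
    refine (QIAux.scalar_bridge (eps N ^ j) _ ((-1 : ℂ) ^ j) (hc j) (hκ j)
        (fun s => (m + n - s) * N + i) (fun s => N * s) S a (hApow j) r).trans ?_
    have hEq : ∑ s ∈ S, (a s * ((-1 : ℂ) ^ j) ^ s) * (((N * s).choose r : ℂ)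
          - ((((m + n - s) * N + i).choose r : ℂ)))
        = ∑ s ∈ S, a s * (((N * s).choose r : ℂ)
          - ((((m + n - s) * N + i).choose r : ℂ))) :=
      Finset.sum_congr rfl fun s _ => by rw [Even.neg_one_pow hj, one_pow, mul_one]
    rw [hEq]
  have hjO : ∀ j : ℕ, ¬ Even j →
      (((zP - C (eps N ^ j) * wP) ^ (2 * mult m n j + 1) ∣
          dihRefl N j (∑ s ∈ S, C (a s) * zP ^ ((m + n - s) * N + i) * wP ^ (N * s))
            - ∑ s ∈ S, C (a s) * zP ^ ((m + n - s) * N + i) * wP ^ (N * s))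
        ↔ ∀ r < 2 * n + 1,
            ∑ s ∈ S, (a s * (-1 : ℂ) ^ s) * (((N * s).choose r : ℂ)
              - ((((m + n - s) * N + i).choose r : ℂ))) = 0) := by
    intro j hj
    have hjodd : Odd j := Nat.not_even_iff_odd.mp hj
    rw [hrefl j, show mult m n j = n from if_neg hj]
    refine (QIAux.coeff_dvd (eps N ^ j) (2 * n + 1) ((m + n) * N + i) S
        (fun s => a s * (eps N ^ j) ^ ((m + n - s) * N + i) * ((eps N ^ j)⁻¹) ^ (N * s))
        (fun s => a s) (fun s => (m + n - s) * N + i) (fun s => N * s) hABsum).trans ?_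
    refine forall₂_congr fun r _ => ?_
    refine (QIAux.scalar_bridge (eps N ^ j) _ ((-1 : ℂ) ^ j) (hc j) (hκ j)
        (fun s => (m + n - s) * N + i) (fun s => N * s) S a (hApow j) r).trans ?_
    have hEq : ∑ s ∈ S, (a s * ((-1 : ℂ) ^ j) ^ s) * (((N * s).choose r : ℂ)
          - ((((m + n - s) * N + i).choose r : ℂ)))
        = ∑ s ∈ S, (a s * (-1 : ℂ) ^ s) * (((N * s).choose r : ℂ)
          - ((((m + n - s) * N + i).choose r : ℂ))) :=
      Finset.sum_congr rfl fun s _ => by rw [Odd.neg_one_pow hjodd]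
    rw [hEq]
  have step1 : IsQuasiInv N m n (∑ s ∈ S, C (a s) * zP ^ ((m + n - s) * N + i) * wP ^ (N * s))
      ↔ ((∀ r < 2 * m + 1, ∑ s ∈ S, a s * (((N * s).choose r : ℂ)
            - ((((m + n - s) * N + i).choose r : ℂ))) = 0)
        ∧ (∀ r < 2 * n + 1, ∑ s ∈ S, (a s * (-1 : ℂ) ^ s) * (((N * s).choose r : ℂ)
            - ((((m + n - s) * N + i).choose r : ℂ))) = 0)) := by
    unfold IsQuasiInv
    constructor
    · intro h
      exact ⟨(hjE 0 Even.zero).mp (h 0 (by omega)),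
             (hjO 1 (by simp)).mp (h 1 (by omega))⟩
    · rintro ⟨hE, hO⟩ j hj
      rcases Nat.even_or_odd j with hje | hjo
      · exact (hjE j hje).mpr hE
      · exact (hjO j (Nat.not_even_iff_odd.mpr hjo)).mpr hO
  have hμcast : ∀ s ∈ S, ((((m + n - s) * N + i : ℕ)) : ℂ) - ((N * s : ℕ) : ℂ)
      = (((m : ℂ) + n) - 2 * s) * N + i := by
    intro s hs
    have h := hsmn s hs
    have h1 : ((m + n - s : ℕ) : ℂ) = (m : ℂ) + (n : ℂ) - (s : ℂ) := by
      rw [Nat.cast_sub h]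
      push_cast
      ring
    push_cast
    rw [h1]
    ring
  have hPSeq : ∀ (b : ℕ → ℂ) (e : ℕ),
      ∑ s ∈ S, b s * (((((m + n - s) * N + i : ℕ)) : ℂ) - ((N * s : ℕ) : ℂ)) ^ e
        = ∑ s ∈ S, b s * ((((m : ℂ) + n) - 2 * s) * N + i) ^ e :=
    fun b e => Finset.sum_congr rfl fun s hs => by rw [hμcast s hs]
  have hlE := QIAux.linalg S a (fun s => N * s) (fun s => (m + n - s) * N + i)
      ((m + n) * N + i) hBAsum m
  have hlO := QIAux.linalg S (fun s => a s * (-1 : ℂ) ^ s) (fun s => N * s)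
      (fun s => (m + n - s) * N + i) ((m + n) * N + i) hBAsum n
  have step2 : (∀ r < 2 * m + 1, ∑ s ∈ S, a s * (((N * s).choose r : ℂ)
        - ((((m + n - s) * N + i).choose r : ℂ))) = 0)
      ↔ (∀ k, 1 ≤ k → k ≤ m →
          ∑ s ∈ S, a s * ((((m : ℂ) + n) - 2 * s) * N + i) ^ (2 * k - 1) = 0) := by
    constructor
    · intro h k h1 h2
      rw [← hPSeq a (2 * k - 1)]
      exact hlE.mp (fun r hr => h r (by omega)) k h1 h2
    · intro h r hr
      exact hlE.mpr (fun k h1 h2 => by rw [hPSeq a]; exact h k h1 h2) r (by omega)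
  have step3 : (∀ r < 2 * n + 1, ∑ s ∈ S, (a s * (-1 : ℂ) ^ s) * (((N * s).choose r : ℂ)
        - ((((m + n - s) * N + i).choose r : ℂ))) = 0)
      ↔ (∀ k, 1 ≤ k → k ≤ n →
          ∑ s ∈ S, (a s * (-1 : ℂ) ^ s) * ((((m : ℂ) + n) - 2 * s) * N + i) ^ (2 * k - 1)
            = 0) := by
    constructor
    · intro h k h1 h2
      rw [← hPSeq (fun s => a s * (-1 : ℂ) ^ s) (2 * k - 1)]
      exact hlO.mp (fun r hr => h r (by omega)) k h1 h2
    · intro h r hr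
      exact hlO.mpr (fun k h1 h2 => by
        rw [hPSeq (fun s => a s * (-1 : ℂ) ^ s)]
        exact h k h1 h2) r (by omega)
  have hEvsplit : ∀ e : ℕ,
      ∑ s ∈ S.filter (fun s => Even s), a s * ((((m : ℂ) + n) - 2 * s) * N + i) ^ e
        = ((∑ s ∈ S, a s * ((((m : ℂ) + n) - 2 * s) * N + i) ^ e)
          + ∑ s ∈ S, (a s * (-1 : ℂ) ^ s) * ((((m : ℂ) + n) - 2 * s) * N + i) ^ e) / 2 := by
    intro e
    rw [Finset.sum_filter, ← Finset.sum_add_distrib, Finset.sum_div]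
    apply Finset.sum_congr rfl
    intro s _
    rcases Nat.even_or_odd s with hs | hs
    · rw [if_pos hs, hs.neg_one_pow]
      ring
    · rw [if_neg (Nat.not_even_iff_odd.mpr hs), hs.neg_one_pow]
      ring
  have hOdsplit : ∀ e : ℕ,
      ∑ s ∈ S.filter (fun s => ¬ Even s), a s * ((((m : ℂ) + n) - 2 * s) * N + i) ^ e
        = ((∑ s ∈ S, a s * ((((m : ℂ) + n) - 2 * s) * N + i) ^ e)
          - ∑ s ∈ S, (a s * (-1 : ℂ) ^ s) * ((((m : ℂ) + n) - 2 * s) * N + i) ^ e) / 2 := by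
    intro e
    rw [Finset.sum_filter, ← Finset.sum_sub_distrib, Finset.sum_div]
    apply Finset.sum_congr rfl
    intro s _
    rcases Nat.even_or_odd s with hs | hs
    · rw [if_neg (by simpa using hs), hs.neg_one_pow]
      ring
    · rw [if_pos (Nat.not_even_iff_odd.mpr hs), hs.neg_one_pow]
      ring
  have step4 : ((∀ k, 1 ≤ k → k ≤ m →
        ∑ s ∈ S, a s * ((((m : ℂ) + n) - 2 * s) * N + i) ^ (2 * k - 1) = 0)
      ∧ (∀ k, 1 ≤ k → k ≤ n →
        ∑ s ∈ S, (a s * (-1 : ℂ) ^ s) * ((((m : ℂ) + n) - 2 * s) * N + i) ^ (2 * k - 1) = 0))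
      ↔ ((∀ t, 1 ≤ t → t ≤ n →
          ∑ s ∈ S.filter (fun s => Even s),
            a s * ((((m : ℂ) + n) - 2 * s) * N + i) ^ (2 * t - 1) = 0) ∧
        (∀ t, 1 ≤ t → t ≤ n →
          ∑ s ∈ S.filter (fun s => ¬ Even s),
            a s * ((((m : ℂ) + n) - 2 * s) * N + i) ^ (2 * t - 1) = 0) ∧
        (∀ t, n < t → t ≤ m →
          ∑ s ∈ S, a s * ((((m : ℂ) + n) - 2 * s) * N + i) ^ (2 * t - 1) = 0)) := by
    constructor
    · rintro ⟨hP, hQ⟩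
      refine ⟨?_, ?_, ?_⟩
      · intro t h1 h2
        rw [hEvsplit, hP t h1 (le_trans h2 hnm), hQ t h1 h2]
        norm_num
      · intro t h1 h2
        rw [hOdsplit, hP t h1 (le_trans h2 hnm), hQ t h1 h2]
        norm_num
      · intro t h1 h2
        exact hP t (by omega) h2
    · rintro ⟨h1, h2, h3⟩
      constructor
      · intro k hk1 hkm
        by_cases hkn : k ≤ n
        · have e1 := h1 k hk1 hkn
          have e2 := h2 k hk1 hkn
          rw [hEvsplit] at e1
          rw [hOdsplit] at e2
          linear_combination e1 + e2
        · exact h3 k (by omega) hkm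
      · intro k hk1 hkn
        have e1 := h1 k hk1 hkn
        have e2 := h2 k hk1 hkn
        rw [hEvsplit] at e1
        rw [hOdsplit] at e2
        linear_combination e1 - e2
  exact step1.trans ((and_congr step2 step3).trans step4)
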